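/- arXiv:2006.06179 — 5 statements merged into one kernel-verified Lean document; each statement's English description precedes it below -/
import Mathlib

section
/- Let x = ∑_{i∈S} γᵢ Dᵢ⁰ with |S| = k, where D₀ has unit-norm columns and mutual coherence μ₀, and let γ₁ be the entry of largest magnitude. Suppose d̂ is a unit vector with ‖D₁⁰ − d̂‖²₂ ≤ ε, where 1 ∈ S is the index of γ₁. Then |xᵀ d̂| ≥ ((1 − ε/2) − (k−1)(μ₀ + √ε)) |γ₁|. -/
open scoped RealInnerProductSpace BigOperators

/-- Let `x = ∑_{i∈S} γᵢ Dᵢ⁰` with `|S| = k`, where `D₀` has unit-norm columns and mutual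
coherence at most `μ₀`, and let `γ_{i₁}` be the entry of largest magnitude. If `d̂` is a unit
vector with `‖D_{i₁}⁰ − d̂‖² ≤ ε`, then
`|xᵀ d̂| ≥ ((1 − ε/2) − (k−1)(μ₀ + √ε)) |γ_{i₁}|`. -/
theorem stmt7 {d p : ℕ} (D : Fin p → EuclideanSpace ℝ (Fin d))
    (hunit : ∀ i, ‖D i‖ = 1)
    (μ0 : ℝ) (hμ0 : 0 ≤ μ0) (hcoh : ∀ i j, i ≠ j → |⟪D i, D j⟫| ≤ μ0)
    (S : Finset (Fin p)) (k : ℕ) (hS : S.card = k)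
    (γ : Fin p → ℝ) (i₁ : Fin p) (hi₁ : i₁ ∈ S) (hmax : ∀ i ∈ S, |γ i| ≤ |γ i₁|)
    (ε : ℝ) (hε : 0 ≤ ε)
    (dh : EuclideanSpace ℝ (Fin d)) (hdh : ‖dh‖ = 1)
    (hclose : ‖D i₁ - dh‖ ^ 2 ≤ ε) :
    ((1 - ε / 2) - ((k : ℝ) - 1) * (μ0 + Real.sqrt ε)) * |γ i₁|
      ≤ |⟪∑ i ∈ S, γ i • D i, dh⟫| := by
  have hk1 : 1 ≤ k := by
    rw [← hS]; exact Finset.card_pos.mpr ⟨i₁, hi₁⟩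
  set t := ⟪D i₁, dh⟫ with ht
  have hnorm : ‖D i₁ - dh‖ ^ 2 = 2 - 2 * t := by
    rw [norm_sub_sq_real, hunit, hdh]; ring
  have ht_lb : 1 - ε / 2 ≤ t := by nlinarith [hclose]
  have hd : ‖D i₁ - dh‖ ≤ Real.sqrt ε := by
    have h := Real.sqrt_le_sqrt hclose
    rwa [Real.sqrt_sq (norm_nonneg _)] at h
  have hbound : ∀ i ∈ S.erase i₁, |⟪D i, dh⟫| ≤ μ0 + Real.sqrt ε := by
    intro i hi
    have hne : i ≠ i₁ := (Finset.mem_erase.mp hi).1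
    have hsplit : ⟪D i, dh⟫ = ⟪D i, D i₁⟫ + ⟪D i, dh - D i₁⟫ := by
      rw [inner_sub_right]; ring
    rw [hsplit]
    calc |⟪D i, D i₁⟫ + ⟪D i, dh - D i₁⟫|
        ≤ |⟪D i, D i₁⟫| + |⟪D i, dh - D i₁⟫| := abs_add_le _ _
      _ ≤ μ0 + Real.sqrt ε := by
          refine add_le_add (hcoh i i₁ hne) ?_
          calc |⟪D i, dh - D i₁⟫| ≤ ‖D i‖ * ‖dh - D i₁‖ := abs_real_inner_le_norm _ _
            _ = ‖D i₁ - dh‖ := by rw [hunit, one_mul, norm_sub_rev]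
            _ ≤ Real.sqrt ε := hd
  have hsum : ⟪∑ i ∈ S, γ i • D i, dh⟫
      = γ i₁ * t + ∑ i ∈ S.erase i₁, γ i * ⟪D i, dh⟫ := by
    rw [sum_inner]
    simp_rw [real_inner_smul_left]
    rw [← Finset.add_sum_erase S _ hi₁]
  have hr : |∑ i ∈ S.erase i₁, γ i * ⟪D i, dh⟫|
      ≤ ((k : ℝ) - 1) * ((μ0 + Real.sqrt ε) * |γ i₁|) := by
    calc |∑ i ∈ S.erase i₁, γ i * ⟪D i, dh⟫|
        ≤ ∑ i ∈ S.erase i₁, |γ i * ⟪D i, dh⟫| := Finset.abs_sum_le_sum_abs _ _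
      _ ≤ ∑ _i ∈ S.erase i₁, (μ0 + Real.sqrt ε) * |γ i₁| := by
          apply Finset.sum_le_sum
          intro i hi
          rw [abs_mul]
          have h1 := hmax i (Finset.mem_of_mem_erase hi)
          have h2 := hbound i hi
          have h3 := abs_nonneg (⟪D i, dh⟫)
          have h4 := abs_nonneg (γ i)
          nlinarith
      _ = ((S.erase i₁).card : ℝ) * ((μ0 + Real.sqrt ε) * |γ i₁|) := by
          rw [Finset.sum_const, nsmul_eq_mul]
      _ = ((k : ℝ) - 1) * ((μ0 + Real.sqrt ε) * |γ i₁|) := by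
          rw [Finset.card_erase_of_mem hi₁, hS, Nat.cast_sub hk1, Nat.cast_one]
  have hmain : |γ i₁| * (1 - ε / 2) ≤ |γ i₁ * t| := by
    rw [abs_mul]
    exact mul_le_mul_of_nonneg_left (le_trans ht_lb (le_abs_self t)) (abs_nonneg _)
  rw [hsum]
  have htri : |γ i₁ * t| - |∑ i ∈ S.erase i₁, γ i * ⟪D i, dh⟫|
      ≤ |γ i₁ * t + ∑ i ∈ S.erase i₁, γ i * ⟪D i, dh⟫| := by
    have h := abs_add_le (γ i₁ * t + ∑ i ∈ S.erase i₁, γ i * ⟪D i, dh⟫)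
      (-(∑ i ∈ S.erase i₁, γ i * ⟪D i, dh⟫))
    simp only [add_neg_cancel_right, abs_neg] at h
    linarith
  nlinarith
end

section
/- (Correct atom selection by single-step matching pursuit) Let D₀ ∈ R^{d×p} have unit-norm columns with coherence μ₀ = μ(D₀), and let D̂ = [D̂₀, A] ∈ R^{d×p′} have unit-norm columns, where for each i ≤ p, ‖Dᵢ⁰ − D̂ᵢ⁰‖²₂ ≤ ε (the i-th column of D̂₀ is ε-close to Dᵢ⁰), and the cross-coherence μ(D₀, A) = max_{i,ℓ}|⟨Dᵢ⁰, A_ℓ⟩|. If x = D₀γ with ‖γ‖₀ ≤ k and k ≤ (1 − ε/2 + √ε + μ₀)/(μ₀ + √ε + μ(D₀, A)), then argmax_j |xᵀ D̂ⱼ| lies among the columns of D̂₀ (i.e., the most correlated atom is ε-close to a true atom). -/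
open scoped RealInnerProductSpace BigOperators

/-- Correct atom selection by single-step matching pursuit (Theorem 2 of the paper).
`D₀ ∈ ℝ^{d×p}` has unit-norm columns with coherence at most `μ₀`; the over-realized dictionary
`D̂ = [D̂₀, A]` has unit-norm columns, each `D̂₀` column `i ≤ p` is `ε`-close (in squared norm)
to `Dᵢ⁰`, and the cross-coherence of `D₀` with `A` is at most `μA`. If `x = D₀ γ` with
`‖γ‖₀ ≤ k` and `k ≤ (1 − ε/2 + √ε + μ₀)/(μ₀ + √ε + μA)`, then the most correlated atom of
`D̂` with `x` lies among the columns of `D̂₀`. -/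
theorem stmt9 {d p m q k : ℕ} (hp : 0 < p) (hpm : p ≤ m)
    (D0 : Fin p → EuclideanSpace ℝ (Fin d))
    (Dh0 : Fin m → EuclideanSpace ℝ (Fin d))
    (A : Fin q → EuclideanSpace ℝ (Fin d))
    (hD0 : ∀ i, ‖D0 i‖ = 1) (hDh0 : ∀ i, ‖Dh0 i‖ = 1) (hA : ∀ ℓ, ‖A ℓ‖ = 1)
    (μ0 μA ε : ℝ) (hμ0 : 0 ≤ μ0) (hμA : 0 ≤ μA) (hε : 0 ≤ ε)
    (hcoh : ∀ i j, i ≠ j → |⟪D0 i, D0 j⟫| ≤ μ0)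
    (hcross : ∀ i ℓ, |⟪D0 i, A ℓ⟫| ≤ μA)
    (hmatch : ∀ i : Fin p, ‖D0 i - Dh0 (Fin.castLE hpm i)‖ ^ 2 ≤ ε)
    (γ : Fin p → ℝ) (hsparse : (Finset.univ.filter fun i => γ i ≠ 0).card ≤ k)
    (hk : 1 ≤ k)
    (hkcond : (k : ℝ) ≤ (1 - ε / 2 + Real.sqrt ε + μ0) / (μ0 + Real.sqrt ε + μA)) :
    ∃ i : Fin m, ∀ ℓ : Fin q,
      |⟪∑ j, γ j • D0 j, A ℓ⟫| ≤ |⟪∑ j, γ j • D0 j, Dh0 i⟫| := by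
  have hden : 0 < μ0 + Real.sqrt ε + μA := by
    rcases lt_or_eq_of_le (by positivity : (0:ℝ) ≤ μ0 + Real.sqrt ε + μA) with h | h
    · exact h
    · exfalso
      rw [← h, div_zero] at hkcond
      have h1 : (1:ℝ) ≤ (k:ℝ) := by exact_mod_cast hk
      linarith
  have hkcond' : (k:ℝ) * (μ0 + Real.sqrt ε + μA) ≤ 1 - ε/2 + Real.sqrt ε + μ0 :=
    (le_div_iff₀ hden).mp hkcond
  have hxinner : ∀ v : EuclideanSpace ℝ (Fin d),
      ⟪∑ j, γ j • D0 j, v⟫ = ∑ j, γ j * ⟪D0 j, v⟫ := by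
    intro v
    rw [sum_inner]
    simp [real_inner_smul_left, Finset.mul_sum, mul_assoc]
  set S := Finset.univ.filter (fun i => γ i ≠ 0) with hSdef
  by_cases hS : S.Nonempty
  · obtain ⟨i0, hi0S, hmax⟩ := S.exists_max_image (fun i => |γ i|) hS
    set M := |γ i0| with hMdef
    have hM : 0 < M := abs_pos.mpr (Finset.mem_filter.mp hi0S).2
    have hMj : ∀ j, |γ j| ≤ M := by
      intro j
      by_cases hj : γ j = 0
      · simp [hj, hM.le]
      · exact hmax j (Finset.mem_filter.mpr ⟨Finset.mem_univ j, hj⟩)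
    set ih := Fin.castLE hpm i0 with hihdef
    set e := D0 i0 - Dh0 ih with hedef
    have hne : ‖e‖ ≤ Real.sqrt ε := by
      have h1 : ‖e‖^2 ≤ ε := hmatch i0
      have := Real.sqrt_le_sqrt h1
      rwa [Real.sqrt_sq (norm_nonneg e)] at this
    have hii : ⟪D0 i0, Dh0 ih⟫ = 1 - ‖e‖^2/2 := by
      have h1 : ‖e‖^2 = ‖D0 i0‖^2 - 2 * ⟪D0 i0, Dh0 ih⟫ + ‖Dh0 ih‖^2 := by
        rw [hedef]
        exact norm_sub_sq_real _ _
      rw [hD0, hDh0] at h1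
      linarith
    have hii' : 1 - ε/2 ≤ ⟪D0 i0, Dh0 ih⟫ := by
      have := hmatch i0
      rw [hii]; linarith [hmatch i0]
    have hj : ∀ j, j ≠ i0 → |⟪D0 j, Dh0 ih⟫| ≤ μ0 + Real.sqrt ε := by
      intro j hjne
      have h1 : ⟪D0 j, Dh0 ih⟫ = ⟪D0 j, D0 i0⟫ - ⟪D0 j, e⟫ := by
        rw [hedef, inner_sub_right]; ring
      have h2 : |⟪D0 j, e⟫| ≤ Real.sqrt ε := by
        calc |⟪D0 j, e⟫| ≤ ‖D0 j‖ * ‖e‖ := abs_real_inner_le_norm _ _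
          _ = ‖e‖ := by rw [hD0]; ring
          _ ≤ Real.sqrt ε := hne
      calc |⟪D0 j, Dh0 ih⟫| = |⟪D0 j, D0 i0⟫ - ⟪D0 j, e⟫| := by rw [h1]
        _ ≤ |⟪D0 j, D0 i0⟫| + |⟪D0 j, e⟫| := abs_sub _ _
        _ ≤ μ0 + Real.sqrt ε := add_le_add (hcoh j i0 hjne) h2
    have hcardE : ((S.erase i0).card : ℝ) ≤ (k:ℝ) - 1 := by
      have h1 : (S.erase i0).card = S.card - 1 := Finset.card_erase_of_mem hi0S
      have h2 : 1 ≤ S.card := Finset.card_pos.mpr hS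
      have : (S.erase i0).card + 1 ≤ k := by omega
      have := (Nat.cast_le (α := ℝ)).mpr this
      push_cast at this
      linarith
    -- lower bound on |⟪x, Dh0 ih⟫|
    have hsplit : ⟪∑ j, γ j • D0 j, Dh0 ih⟫
        = γ i0 * ⟪D0 i0, Dh0 ih⟫ + ∑ j ∈ Finset.univ.erase i0, γ j * ⟪D0 j, Dh0 ih⟫ := by
      rw [hxinner]
      rw [← Finset.add_sum_erase _ _ (Finset.mem_univ i0)]
    have hsum_rest : |∑ j ∈ Finset.univ.erase i0, γ j * ⟪D0 j, Dh0 ih⟫|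
        ≤ ((k:ℝ) - 1) * (M * (μ0 + Real.sqrt ε)) := by
      have h1 : ∑ j ∈ Finset.univ.erase i0, γ j * ⟪D0 j, Dh0 ih⟫
          = ∑ j ∈ S.erase i0, γ j * ⟪D0 j, Dh0 ih⟫ := by
        refine (Finset.sum_subset ?_ ?_).symm
        · intro j hjmem
          rcases Finset.mem_erase.mp hjmem with ⟨h2, _⟩
          exact Finset.mem_erase.mpr ⟨h2, Finset.mem_univ j⟩
        · intro j hjmem hjn
          by_cases hjz : γ j = 0
          · simp [hjz]
          · exact absurd (Finset.mem_erase.mpr ⟨(Finset.mem_erase.mp hjmem).1,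
              Finset.mem_filter.mpr ⟨Finset.mem_univ j, hjz⟩⟩) hjn
      rw [h1]
      calc |∑ j ∈ S.erase i0, γ j * ⟪D0 j, Dh0 ih⟫|
          ≤ ∑ j ∈ S.erase i0, |γ j * ⟪D0 j, Dh0 ih⟫| := Finset.abs_sum_le_sum_abs _ _
        _ ≤ ∑ _j ∈ S.erase i0, M * (μ0 + Real.sqrt ε) := by
            refine Finset.sum_le_sum fun j hjmem => ?_
            rw [abs_mul]
            have hjne := (Finset.mem_erase.mp hjmem).1
            exact mul_le_mul (hMj j) (hj j hjne) (abs_nonneg _)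
              hM.le
        _ = ((S.erase i0).card : ℝ) * (M * (μ0 + Real.sqrt ε)) := by
            rw [Finset.sum_const, nsmul_eq_mul]
        _ ≤ ((k:ℝ) - 1) * (M * (μ0 + Real.sqrt ε)) := by
            apply mul_le_mul_of_nonneg_right hcardE
            positivity
    have hlb : M * (1 - ε/2) - ((k:ℝ) - 1) * (M * (μ0 + Real.sqrt ε))
        ≤ |⟪∑ j, γ j • D0 j, Dh0 ih⟫| := by
      have h1 : |γ i0 * ⟪D0 i0, Dh0 ih⟫| = M * |⟪D0 i0, Dh0 ih⟫| := by
        rw [abs_mul]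
      have h2 : M * (1 - ε/2) ≤ |γ i0 * ⟪D0 i0, Dh0 ih⟫| := by
        rw [h1]
        have : (1 - ε/2) ≤ |⟪D0 i0, Dh0 ih⟫| := le_trans hii' (le_abs_self _)
        exact mul_le_mul_of_nonneg_left this hM.le
      calc M * (1 - ε/2) - ((k:ℝ) - 1) * (M * (μ0 + Real.sqrt ε))
          ≤ |γ i0 * ⟪D0 i0, Dh0 ih⟫| - |∑ j ∈ Finset.univ.erase i0, γ j * ⟪D0 j, Dh0 ih⟫| := by
            have := hsum_rest
            linarith
        _ ≤ |γ i0 * ⟪D0 i0, Dh0 ih⟫ + ∑ j ∈ Finset.univ.erase i0, γ j * ⟪D0 j, Dh0 ih⟫| := by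
            have := abs_add_le (γ i0 * ⟪D0 i0, Dh0 ih⟫ + ∑ j ∈ Finset.univ.erase i0, γ j * ⟪D0 j, Dh0 ih⟫) (-(∑ j ∈ Finset.univ.erase i0, γ j * ⟪D0 j, Dh0 ih⟫))
            simp only [add_neg_cancel_right, abs_neg] at this
            linarith
        _ = |⟪∑ j, γ j • D0 j, Dh0 ih⟫| := by rw [hsplit]
    refine ⟨ih, fun ℓ => ?_⟩
    have hub : |⟪∑ j, γ j • D0 j, A ℓ⟫| ≤ (k:ℝ) * (M * μA) := by
      rw [hxinner]
      have h1 : ∑ j, γ j * ⟪D0 j, A ℓ⟫ = ∑ j ∈ S, γ j * ⟪D0 j, A ℓ⟫ := by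
        refine (Finset.sum_subset (Finset.subset_univ S) ?_).symm
        intro j _ hjn
        have : γ j = 0 := by
          by_contra hjz
          exact hjn (Finset.mem_filter.mpr ⟨Finset.mem_univ j, hjz⟩)
        simp [this]
      rw [h1]
      calc |∑ j ∈ S, γ j * ⟪D0 j, A ℓ⟫| ≤ ∑ j ∈ S, |γ j * ⟪D0 j, A ℓ⟫| :=
            Finset.abs_sum_le_sum_abs _ _
        _ ≤ ∑ _j ∈ S, M * μA := by
            refine Finset.sum_le_sum fun j _ => ?_
            rw [abs_mul]
            exact mul_le_mul (hMj j) (hcross j ℓ) (abs_nonneg _) hM.le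
        _ = (S.card : ℝ) * (M * μA) := by rw [Finset.sum_const, nsmul_eq_mul]
        _ ≤ (k:ℝ) * (M * μA) := by
            apply mul_le_mul_of_nonneg_right
            · exact_mod_cast hsparse
            · positivity
    have key : (k:ℝ) * (M * μA)
        ≤ M * (1 - ε/2) - ((k:ℝ) - 1) * (M * (μ0 + Real.sqrt ε)) := by
      nlinarith [hM.le, hkcond', Real.sqrt_nonneg ε]
    linarith
  · -- all γ zero
    have hall : ∀ j, γ j = 0 := by
      intro j
      by_contra hjz
      exact hS ⟨j, Finset.mem_filter.mpr ⟨Finset.mem_univ j, hjz⟩⟩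
    refine ⟨⟨0, lt_of_lt_of_le hp hpm⟩, fun ℓ => ?_⟩
    simp [hxinner, hall]
end

section
/- (Lower bound of Lemma 1) Let D₀ ∈ R^{d×p} have unit-norm columns, and for each atom Dᵢ⁰ let d(Dᵢ⁰, D̂) = min_{j, c∈{±1}} ‖Dᵢ⁰ − c D̂ⱼ‖²₂ for a unit-norm-column dictionary D̂ ∈ R^{d×p′}. Let x = D₀γ where supp(γ) = S is a uniformly random k-subset of [p] and the nonzeros of γ are i.i.d. mean-zero, unit-variance. Then E[f_x^{[k]}(D̂)] ≤ (k/2)·d(D̂, D₀), where f_x^{[k]}(D̂) = inf_{‖α‖₀ ≤ k} (1/2)‖x − D̂α‖²₂ and d(D̂, D₀) = (1/p)∑_{i=1}^p d(Dᵢ⁰, D̂). -/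
open scoped RealInnerProductSpace BigOperators
open MeasureTheory ProbabilityTheory

private lemma exp_norm_sq_aux {Ω : Type*} [MeasurableSpace Ω] {μ : Measure Ω}
    [IsProbabilityMeasure μ] {p d : ℕ} (γ : Fin p → Ω → ℝ)
    (hind : iIndepFun γ μ)
    (hL2 : ∀ i, MemLp (γ i) 2 μ)
    (hmean : ∀ i, ∫ ω, γ i ω ∂μ = 0)
    (hvar : ∀ i, ∫ ω, (γ i ω) ^ 2 ∂μ = 1)
    (S : Finset (Fin p)) (v : Fin p → EuclideanSpace ℝ (Fin d)) :
    Integrable (fun ω => ‖∑ i ∈ S, γ i ω • v i‖ ^ 2) μ ∧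
      ∫ ω, ‖∑ i ∈ S, γ i ω • v i‖ ^ 2 ∂μ = ∑ i ∈ S, ‖v i‖ ^ 2 := by
  have hmul : ∀ i i' : Fin p, Integrable (fun ω => γ i ω * γ i' ω) μ := by
    intro i i'
    rcases eq_or_ne i i' with rfl | hne
    · simpa [pow_two] using (hL2 i).integrable_sq
    · exact (hind.indepFun hne).integrable_mul ((hL2 i).integrable one_le_two)
        ((hL2 i').integrable one_le_two)
  have hcov : ∀ i i' : Fin p, i ≠ i' → ∫ ω, γ i ω * γ i' ω ∂μ = 0 := by
    intro i i' hne
    have h := (hind.indepFun hne).integral_mul_eq_mul_integral (hL2 i).1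
      (hL2 i').1
    rw [hmean i, zero_mul] at h
    simpa [Pi.mul_apply] using h
  have hpt : ∀ ω, ‖∑ i ∈ S, γ i ω • v i‖ ^ 2
      = ∑ i ∈ S, ∑ i' ∈ S, (γ i ω * γ i' ω) * ⟪v i, v i'⟫ := by
    intro ω
    rw [← real_inner_self_eq_norm_sq, sum_inner]
    simp_rw [inner_sum, real_inner_smul_left, real_inner_smul_right, mul_assoc]
  have hInner : ∀ i ∈ S, Integrable
      (fun ω => ∑ i' ∈ S, (γ i ω * γ i' ω) * ⟪v i, v i'⟫) μ :=
    fun i _ => integrable_finset_sum _ fun i' _ => (hmul i i').mul_const _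
  have hInt : Integrable
      (fun ω => ∑ i ∈ S, ∑ i' ∈ S, (γ i ω * γ i' ω) * ⟪v i, v i'⟫) μ :=
    integrable_finset_sum _ hInner
  constructor
  · simpa only [hpt] using hInt
  · simp only [hpt]
    rw [integral_finset_sum _ hInner]
    refine Finset.sum_congr rfl fun i hi => ?_
    rw [integral_finset_sum _ (fun i' _ => (hmul i i').mul_const _)]
    rw [Finset.sum_eq_single_of_mem i hi]
    · rw [integral_mul_const]
      have h1 : ∫ ω, γ i ω * γ i ω ∂μ = 1 := by simpa [pow_two] using hvar i
      rw [h1, one_mul, real_inner_self_eq_norm_sq]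
    · intro b _ hb
      rw [integral_mul_const, hcov i b hb.symm, zero_mul]

private lemma count_filter_mem_aux {α : Type*} [DecidableEq α] (s : Finset α) {i : α}
    (hi : i ∈ s) (k : ℕ) :
    ((s.powersetCard (k + 1)).filter (fun S => i ∈ S)).card
      = (s.card - 1).choose k := by
  rw [← Finset.card_erase_of_mem hi, ← Finset.card_powersetCard]
  refine Finset.card_nbij' (fun S => S.erase i) (fun T => insert i T) ?_ ?_ ?_ ?_
  · intro S hS
    simp only [Finset.mem_coe, Finset.mem_filter, Finset.mem_powersetCard] at hS
    obtain ⟨⟨hsub, hcard⟩, hmem⟩ := hS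
    simp only [Finset.mem_coe, Finset.mem_powersetCard]
    constructor
    · exact fun x hx => Finset.mem_erase.2 ⟨(Finset.mem_erase.1 hx).1,
        hsub (Finset.mem_erase.1 hx).2⟩
    · rw [Finset.card_erase_of_mem hmem, hcard]
      omega
  · intro T hT
    simp only [Finset.mem_coe, Finset.mem_powersetCard] at hT
    obtain ⟨hsub, hcard⟩ := hT
    have hiT : i ∉ T := fun h => (Finset.mem_erase.1 (hsub h)).1 rfl
    simp only [Finset.mem_coe, Finset.mem_filter, Finset.mem_powersetCard]
    refine ⟨⟨?_, ?_⟩, Finset.mem_insert_self _ _⟩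
    · intro x hx
      rcases Finset.mem_insert.1 hx with rfl | hx
      · exact hi
      · exact (Finset.mem_erase.1 (hsub hx)).2
    · rw [Finset.card_insert_of_notMem hiT, hcard]
  · intro S hS
    simp only [Finset.mem_coe, Finset.mem_filter] at hS
    exact Finset.insert_erase hS.2
  · intro T hT
    simp only [Finset.mem_coe, Finset.mem_powersetCard] at hT
    have hiT : i ∉ T := fun h => (Finset.mem_erase.1 (hT.1 h)).1 rfl
    exact Finset.erase_insert hiT

/-- Lower bound of Lemma 1: with `x = D₀ γ`, where the support `S` is a uniformly random
`k`-subset of `[p]` and the nonzero coefficients of `γ` are independent with mean zero and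
unit variance, the expected `k`-sparse coding loss on `D̂` satisfies
`E[f_x^{[k]}(D̂)] ≤ (k/2) d(D̂, D₀)`, where
`d(D̂, D₀) = (1/p) ∑ᵢ min_{j, c = ±1} ‖Dᵢ⁰ − c D̂ⱼ‖²`. -/
theorem stmt12 {Ω : Type*} [MeasurableSpace Ω] {μ : Measure Ω} [IsProbabilityMeasure μ]
    {d p p' k : ℕ} (hp : 0 < p) (hp' : 0 < p') (hkp : k ≤ p)
    (D0 : Fin p → EuclideanSpace ℝ (Fin d)) (Dh : Fin p' → EuclideanSpace ℝ (Fin d))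
    (hD0 : ∀ i, ‖D0 i‖ = 1) (hDh : ∀ j, ‖Dh j‖ = 1)
    (γ : Fin p → Ω → ℝ)
    (hind : iIndepFun γ μ)
    (hL2 : ∀ i, MemLp (γ i) 2 μ)
    (hmean : ∀ i, ∫ ω, γ i ω ∂μ = 0)
    (hvar : ∀ i, ∫ ω, (γ i ω) ^ 2 ∂μ = 1) :
    (1 / (p.choose k : ℝ)) *
        ∑ S ∈ Finset.powersetCard k (Finset.univ : Finset (Fin p)),
          ∫ ω, (⨅ α : {a : Fin p' → ℝ // (Finset.univ.filter fun j => a j ≠ 0).card ≤ k},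
            (1 / 2) * ‖(∑ i ∈ S, γ i ω • D0 i) - ∑ j, (α : Fin p' → ℝ) j • Dh j‖ ^ 2) ∂μ
      ≤ ((k : ℝ) / 2) *
          ((1 / (p : ℝ)) * ∑ i, ⨅ j : Fin p',
            min (‖D0 i - Dh j‖ ^ 2) (‖D0 i + Dh j‖ ^ 2)) := by
  haveI : Nonempty (Fin p') := ⟨⟨0, hp'⟩⟩
  set dd : Fin p → ℝ := fun i => ⨅ j : Fin p',
      min (‖D0 i - Dh j‖ ^ 2) (‖D0 i + Dh j‖ ^ 2) with hdd
  -- choose for each i a best atom and sign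
  have hchoice : ∀ i : Fin p, ∃ j : Fin p', ∃ c : ℝ, (c = 1 ∨ c = -1) ∧
      ‖D0 i - c • Dh j‖ ^ 2 = dd i := by
    intro i
    obtain ⟨j, -, hj⟩ := Finset.exists_min_image Finset.univ
      (fun j : Fin p' => min (‖D0 i - Dh j‖ ^ 2) (‖D0 i + Dh j‖ ^ 2)) Finset.univ_nonempty
    have hj : ∀ j', min (‖D0 i - Dh j‖ ^ 2) (‖D0 i + Dh j‖ ^ 2)
        ≤ min (‖D0 i - Dh j'‖ ^ 2) (‖D0 i + Dh j'‖ ^ 2) := fun j' => hj j' (Finset.mem_univ _)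
    have heq : min (‖D0 i - Dh j‖ ^ 2) (‖D0 i + Dh j‖ ^ 2) = dd i := by
      refine le_antisymm (le_ciInf hj) (ciInf_le ⟨0, ?_⟩ j)
      rintro x ⟨j', rfl⟩
      exact le_min (by positivity) (by positivity)
    rcases le_total (‖D0 i - Dh j‖ ^ 2) (‖D0 i + Dh j‖ ^ 2) with h | h
    · exact ⟨j, 1, Or.inl rfl, by rw [one_smul, ← min_eq_left h, heq]⟩
    · refine ⟨j, -1, Or.inr rfl, ?_⟩
      rw [neg_smul, one_smul, sub_neg_eq_add, ← min_eq_right h, heq]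
  choose jj cc hcc hvv using hchoice
  set v : Fin p → EuclideanSpace ℝ (Fin d) := fun i => D0 i - cc i • Dh (jj i) with hv
  have hdd_nonneg : ∀ i, 0 ≤ dd i := fun i => (hvv i) ▸ (by positivity)
  -- per-S bound on the integral
  have hperS : ∀ S ∈ Finset.powersetCard k (Finset.univ : Finset (Fin p)),
      (∫ ω, (⨅ α : {a : Fin p' → ℝ // (Finset.univ.filter fun j => a j ≠ 0).card ≤ k},
        (1 / 2) * ‖(∑ i ∈ S, γ i ω • D0 i) - ∑ j, (α : Fin p' → ℝ) j • Dh j‖ ^ 2) ∂μ)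
      ≤ (1 / 2) * ∑ i ∈ S, dd i := by
    intro S hS
    have hScard : S.card = k := (Finset.mem_powersetCard.1 hS).2
    obtain ⟨hIntg, hIg⟩ := exp_norm_sq_aux γ hind hL2 hmean hvar S v
    -- the candidate coefficient vector
    have hle : ∀ ω, (⨅ α : {a : Fin p' → ℝ // (Finset.univ.filter fun j => a j ≠ 0).card ≤ k},
        (1 / 2) * ‖(∑ i ∈ S, γ i ω • D0 i) - ∑ j, (α : Fin p' → ℝ) j • Dh j‖ ^ 2)
        ≤ (1 / 2) * ‖∑ i ∈ S, γ i ω • v i‖ ^ 2 := by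
      intro ω
      set a : Fin p' → ℝ := fun b => ∑ i ∈ S.filter (fun i => jj i = b), cc i * γ i ω with ha
      have hsupp : (Finset.univ.filter fun b => a b ≠ 0).card ≤ k := by
        have hsub : (Finset.univ.filter fun b => a b ≠ 0) ⊆ S.image jj := by
          intro b hb
          simp only [Finset.mem_filter, Finset.mem_univ, true_and] at hb
          by_contra hbn
          apply hb
          rw [ha]
          apply Finset.sum_eq_zero
          intro i hi
          exfalso
          exact hbn (Finset.mem_image.2 ⟨i, (Finset.mem_filter.1 hi).1,
            (Finset.mem_filter.1 hi).2⟩)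
        calc (Finset.univ.filter fun b => a b ≠ 0).card ≤ (S.image jj).card :=
              Finset.card_le_card hsub
          _ ≤ S.card := Finset.card_image_le
          _ = k := hScard
      have hval : ∑ b, a b • Dh b = ∑ i ∈ S, (cc i * γ i ω) • Dh (jj i) := by
        rw [← Finset.sum_fiberwise S jj (fun i => (cc i * γ i ω) • Dh (jj i))]
        refine Finset.sum_congr rfl fun b _ => ?_
        rw [ha, Finset.sum_smul]
        exact Finset.sum_congr rfl fun i hi => by
          rw [(Finset.mem_filter.1 hi).2]
      have hrw : (∑ i ∈ S, γ i ω • D0 i) - ∑ b, a b • Dh b = ∑ i ∈ S, γ i ω • v i := by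
        rw [hval, ← Finset.sum_sub_distrib]
        refine Finset.sum_congr rfl fun i _ => ?_
        simp only [hv]
        rw [smul_sub, smul_smul, mul_comm (γ i ω) (cc i)]
      calc (⨅ α : {a : Fin p' → ℝ // (Finset.univ.filter fun j => a j ≠ 0).card ≤ k},
            (1 / 2) * ‖(∑ i ∈ S, γ i ω • D0 i) - ∑ j, (α : Fin p' → ℝ) j • Dh j‖ ^ 2)
          ≤ (1 / 2) * ‖(∑ i ∈ S, γ i ω • D0 i) - ∑ b, a b • Dh b‖ ^ 2 :=
            ciInf_le ⟨0, by rintro x ⟨α, rfl⟩; positivity⟩ (⟨a, hsupp⟩ :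
              {a : Fin p' → ℝ // (Finset.univ.filter fun j => a j ≠ 0).card ≤ k})
        _ = (1 / 2) * ‖∑ i ∈ S, γ i ω • v i‖ ^ 2 := by rw [hrw]
    have hnn : 0 ≤ᵐ[μ] fun ω =>
        (⨅ α : {a : Fin p' → ℝ // (Finset.univ.filter fun j => a j ≠ 0).card ≤ k},
          (1 / 2) * ‖(∑ i ∈ S, γ i ω • D0 i) - ∑ j, (α : Fin p' → ℝ) j • Dh j‖ ^ 2) := by
      refine Filter.Eventually.of_forall fun ω => ?_
      exact Real.iInf_nonneg fun α => by positivity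
    calc (∫ ω, (⨅ α : {a : Fin p' → ℝ // (Finset.univ.filter fun j => a j ≠ 0).card ≤ k},
          (1 / 2) * ‖(∑ i ∈ S, γ i ω • D0 i) - ∑ j, (α : Fin p' → ℝ) j • Dh j‖ ^ 2) ∂μ)
        ≤ ∫ ω, (1 / 2) * ‖∑ i ∈ S, γ i ω • v i‖ ^ 2 ∂μ :=
          integral_mono_of_nonneg hnn (hIntg.const_mul _)
            (Filter.Eventually.of_forall hle)
      _ = (1 / 2) * ∑ i ∈ S, dd i := by
          rw [integral_const_mul, hIg]
          congr 1
          exact Finset.sum_congr rfl fun i _ => hvv i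
  -- combine
  have hCpos : (0 : ℝ) < (p.choose k : ℝ) := by
    exact_mod_cast Nat.choose_pos hkp
  have hstep : (1 / (p.choose k : ℝ)) *
      ∑ S ∈ Finset.powersetCard k (Finset.univ : Finset (Fin p)),
        ∫ ω, (⨅ α : {a : Fin p' → ℝ // (Finset.univ.filter fun j => a j ≠ 0).card ≤ k},
          (1 / 2) * ‖(∑ i ∈ S, γ i ω • D0 i) - ∑ j, (α : Fin p' → ℝ) j • Dh j‖ ^ 2) ∂μ
      ≤ (1 / (p.choose k : ℝ)) *
        ∑ S ∈ Finset.powersetCard k (Finset.univ : Finset (Fin p)),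
          (1 / 2) * ∑ i ∈ S, dd i := by
    apply mul_le_mul_of_nonneg_left (Finset.sum_le_sum hperS) (by positivity)
  refine hstep.trans ?_
  -- counting identity
  rcases Nat.eq_zero_or_pos k with rfl | hk
  · simp [Finset.powersetCard_zero]
  · obtain ⟨m, rfl⟩ := Nat.exists_eq_succ_of_ne_zero hk.ne'
    have hcount : ∑ S ∈ Finset.powersetCard (m + 1) (Finset.univ : Finset (Fin p)),
        ∑ i ∈ S, dd i = ((p - 1).choose m : ℝ) * ∑ i, dd i := by
      have h1 : ∀ S : Finset (Fin p), ∑ i ∈ S, dd i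
          = ∑ i : Fin p, if i ∈ S then dd i else 0 := by
        intro S
        rw [← Finset.sum_filter]
        congr 1
        ext i
        simp
      simp only [h1]
      rw [Finset.sum_comm, Finset.mul_sum]
      refine Finset.sum_congr rfl fun i _ => ?_
      rw [← Finset.sum_filter, Finset.sum_const, nsmul_eq_mul,
        count_filter_mem_aux Finset.univ (Finset.mem_univ i) m]
      simp [Finset.card_univ]
    have hnat : (p : ℝ) * ((p - 1).choose m : ℝ) = (p.choose (m + 1) : ℝ) * ((m : ℝ) + 1) := by
      have h0 := Nat.add_one_mul_choose_eq (p - 1) m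
      rw [Nat.sub_add_cancel hp] at h0
      exact_mod_cast h0
    have hT : (0 : ℝ) ≤ ∑ i, dd i := Finset.sum_nonneg fun i _ => hdd_nonneg i
    have hppos : (0 : ℝ) < (p : ℝ) := by exact_mod_cast hp
    rw [← Finset.mul_sum, hcount]
    have hcast : ((m + 1 : ℕ) : ℝ) = (m : ℝ) + 1 := by push_cast; ring
    rw [hcast]
    rw [show (1 / (p.choose (m + 1) : ℝ)) * ((1 / 2) * (((p - 1).choose m : ℝ) * ∑ i, dd i))
        = (((p : ℝ) * ((p - 1).choose m : ℝ)) / ((p.choose (m + 1) : ℝ) * (p : ℝ))) *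
          ((1 / 2) * ∑ i, dd i) by field_simp, hnat]
    have hC' : (p.choose (m + 1) : ℝ) ≠ 0 := hCpos.ne'
    rw [show ((p.choose (m + 1) : ℝ) * ((m : ℝ) + 1)) / ((p.choose (m + 1) : ℝ) * (p : ℝ))
        = ((m : ℝ) + 1) / (p : ℝ) by field_simp]
    apply le_of_eq
    ring
end

section
/- (Upper bound of Lemma 1, k = 1 case) Let D₀ ∈ R^{d×p} and D̂ ∈ R^{d×p′} both have unit-norm columns. Let x = γ_i D_i⁰ where i is uniform on [p] and γ_i has mean zero and variance 1. Then E[f_x^{[1]}(D̂)] ≥ (1/4)·d(D̂, D₀), where f_x^{[1]}(D̂) = min_j min_{α∈R} (1/2)‖x − α D̂ⱼ‖²₂ and d(D̂, D₀) = (1/p)∑_{i=1}^p min_{j, c∈{±1}} ‖Dᵢ⁰ − c D̂ⱼ‖²₂. -/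
open scoped RealInnerProductSpace BigOperators
open MeasureTheory ProbabilityTheory

lemma infAlpha {d : ℕ} (u v : EuclideanSpace ℝ (Fin d)) (hu : ‖u‖ = 1) (hv : ‖v‖ = 1)
    (c : ℝ) :
    ⨅ α : ℝ, (1 / 2) * ‖c • u - α • v‖ ^ 2
      = c ^ 2 * ((1 / 2) * (1 - ⟪u, v⟫ ^ 2)) := by
  set t := ⟪u, v⟫ with ht
  have key : ∀ α : ℝ, (1 / 2) * ‖c • u - α • v‖ ^ 2
      = (1 / 2) * (α - c * t) ^ 2 + c ^ 2 * ((1 / 2) * (1 - t ^ 2)) := by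
    intro α
    have hn : ‖c • u - α • v‖ ^ 2 = c ^ 2 - 2 * (c * α * t) + α ^ 2 := by
      rw [norm_sub_sq_real, norm_smul, norm_smul, real_inner_smul_left,
        real_inner_smul_right, hu, hv, ← ht]
      simp [mul_pow, sq_abs]
      ring
    rw [hn]; ring
  apply le_antisymm
  · refine (ciInf_le ⟨0, ?_⟩ (c * t)).trans_eq ?_
    · rintro x ⟨α, rfl⟩; positivity
    · rw [key]; ring
  · exact le_ciInf fun α => by rw [key α]; nlinarith [sq_nonneg (α - c * t)]

/-- Upper bound of Lemma 1, `k = 1` case: with `x = γ • Dᵢ⁰` where the index `i` is uniform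
on `[p]` and the coefficient `γ` has mean zero and unit variance,
`E[f_x^{[1]}(D̂)] ≥ (1/4) d(D̂, D₀)`, where
`f_x^{[1]}(D̂) = min_j min_α (1/2)‖x − α D̂ⱼ‖²` and
`d(D̂, D₀) = (1/p) ∑ᵢ min_{j, c = ±1} ‖Dᵢ⁰ − c D̂ⱼ‖²`. -/
theorem stmt15 {Ω : Type*} [MeasurableSpace Ω] {μ : Measure Ω} [IsProbabilityMeasure μ]
    {d p p' : ℕ} (hp : 0 < p) (hp' : 0 < p')
    (D0 : Fin p → EuclideanSpace ℝ (Fin d)) (Dh : Fin p' → EuclideanSpace ℝ (Fin d))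
    (hD0 : ∀ i, ‖D0 i‖ = 1) (hDh : ∀ j, ‖Dh j‖ = 1)
    (γ : Ω → ℝ) (hL2 : MemLp γ 2 μ)
    (hmean : ∫ ω, γ ω ∂μ = 0) (hvar : ∫ ω, (γ ω) ^ 2 ∂μ = 1) :
    (1 / 4) * ((1 / (p : ℝ)) * ∑ i, ⨅ j : Fin p',
        min (‖D0 i - Dh j‖ ^ 2) (‖D0 i + Dh j‖ ^ 2))
      ≤ (1 / (p : ℝ)) * ∑ i, ∫ ω,
          (⨅ j : Fin p', ⨅ α : ℝ, (1 / 2) * ‖γ ω • D0 i - α • Dh j‖ ^ 2) ∂μ := by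
  haveI : Nonempty (Fin p') := Fin.pos_iff_nonempty.mp hp'
  -- compute the integral for each i
  have hint : ∀ i, ∫ ω, (⨅ j : Fin p', ⨅ α : ℝ, (1 / 2) * ‖γ ω • D0 i - α • Dh j‖ ^ 2) ∂μ
      = ⨅ j : Fin p', (1 / 2) * (1 - ⟪D0 i, Dh j⟫ ^ 2) := by
    intro i
    have hpt : ∀ ω, (⨅ j : Fin p', ⨅ α : ℝ, (1 / 2) * ‖γ ω • D0 i - α • Dh j‖ ^ 2)
        = (γ ω) ^ 2 * ⨅ j : Fin p', (1 / 2) * (1 - ⟪D0 i, Dh j⟫ ^ 2) := by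
      intro ω
      rw [Real.mul_iInf_of_nonneg (sq_nonneg _)]
      exact iInf_congr fun j => infAlpha (D0 i) (Dh j) (hD0 i) (hDh j) (γ ω)
    calc ∫ ω, (⨅ j : Fin p', ⨅ α : ℝ, (1 / 2) * ‖γ ω • D0 i - α • Dh j‖ ^ 2) ∂μ
        = ∫ ω, (γ ω) ^ 2 * (⨅ j : Fin p', (1 / 2) * (1 - ⟪D0 i, Dh j⟫ ^ 2)) ∂μ := by
          exact integral_congr_ae (Filter.Eventually.of_forall hpt)
      _ = (∫ ω, (γ ω) ^ 2 ∂μ) * (⨅ j : Fin p', (1 / 2) * (1 - ⟪D0 i, Dh j⟫ ^ 2)) :=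
          integral_mul_const _ _
      _ = _ := by rw [hvar, one_mul]
  -- per-index inequality
  have hi : ∀ i, (1 / 4) * (⨅ j : Fin p', min (‖D0 i - Dh j‖ ^ 2) (‖D0 i + Dh j‖ ^ 2))
      ≤ ⨅ j : Fin p', (1 / 2) * (1 - ⟪D0 i, Dh j⟫ ^ 2) := by
    intro i
    refine le_ciInf fun j => ?_
    have hb : BddBelow (Set.range fun j : Fin p' =>
        min (‖D0 i - Dh j‖ ^ 2) (‖D0 i + Dh j‖ ^ 2)) :=
      (Set.finite_range _).bddBelow
    have h1 : (⨅ j : Fin p', min (‖D0 i - Dh j‖ ^ 2) (‖D0 i + Dh j‖ ^ 2))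
        ≤ min (‖D0 i - Dh j‖ ^ 2) (‖D0 i + Dh j‖ ^ 2) := ciInf_le hb j
    set t := ⟪D0 i, Dh j⟫ with ht
    have habs : |t| ≤ 1 := by
      have := abs_real_inner_le_norm (D0 i) (Dh j)
      rwa [hD0 i, hDh j, one_mul] at this
    have hsub : ‖D0 i - Dh j‖ ^ 2 = 2 - 2 * t := by
      rw [norm_sub_sq_real, hD0 i, hDh j, ← ht]; ring
    have hadd : ‖D0 i + Dh j‖ ^ 2 = 2 + 2 * t := by
      rw [norm_add_sq_real, hD0 i, hDh j, ← ht]; ring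
    rw [hsub, hadd] at h1
    have ht1 : t ≤ 1 := (abs_le.mp habs).2
    have ht2 : -1 ≤ t := (abs_le.mp habs).1
    rcases le_total 0 t with h | h
    · have : min (2 - 2 * t) (2 + 2 * t) ≤ 2 - 2 * t := min_le_left _ _
      nlinarith
    · have : min (2 - 2 * t) (2 + 2 * t) ≤ 2 + 2 * t := min_le_right _ _
      nlinarith
  -- put things together
  simp_rw [hint]
  rw [mul_left_comm, Finset.mul_sum]
  refine mul_le_mul_of_nonneg_left ?_ (by positivity)
  exact Finset.sum_le_sum fun i _ => hi i
end

section
/- (B-term lower bound) Let D₀ have unit-norm columns with coherence μ₀, let d̂ be a unit vector, and let ν = max_{k≠i*} |⟨d̂, D_k⁰⟩| where i* is the index maximizing |⟨d̂, D_k⁰⟩|. Fix S ⊆ [p] with |S| = k containing an index i, and let γ_{S∖i} have independent mean-zero unit-variance entries. Then E‖(I − d̂ d̂ᵀ) D_{S∖i} γ_{S∖i}‖²₂ ≥ (1 − (k−2)μ₀ − 2ν²)(k−1), provided i* ∉ S∖i or ν bounds all relevant inner products. -/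
open scoped RealInnerProductSpace BigOperators
open MeasureTheory ProbabilityTheory

/-- B-term lower bound: with `D₀` having unit-norm columns and coherence at most `μ₀`, a unit
vector `d̂`, and `ν` bounding `|⟨d̂, D_q⁰⟩|` for all `q ∈ S∖i`, if the coefficients
`γ_{S∖i}` are independent, mean-zero, unit-variance, then
`E ‖(I − d̂ d̂ᵀ) D_{S∖i} γ_{S∖i}‖² ≥ (1 − (k−2) μ₀ − 2ν²)(k−1)`. -/
theorem stmt18 {Ω : Type*} [MeasurableSpace Ω] {μ : Measure Ω} [IsProbabilityMeasure μ]
    {d p k : ℕ} (D0 : Fin p → EuclideanSpace ℝ (Fin d))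
    (hD0 : ∀ i, ‖D0 i‖ = 1)
    (μ0 : ℝ) (hμ0 : 0 ≤ μ0) (hcoh : ∀ i j, i ≠ j → |⟪D0 i, D0 j⟫| ≤ μ0)
    (dh : EuclideanSpace ℝ (Fin d)) (hdh : ‖dh‖ = 1)
    (S : Finset (Fin p)) (hS : S.card = k) (i : Fin p) (hi : i ∈ S)
    (ν : ℝ) (hν : ∀ q ∈ S.erase i, |⟪dh, D0 q⟫| ≤ ν)
    (γ : Fin p → Ω → ℝ)
    (hind : iIndepFun γ μ)
    (hL2 : ∀ q, MemLp (γ q) 2 μ)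
    (hmean : ∀ q, ∫ ω, γ q ω ∂μ = 0)
    (hvar : ∀ q, ∫ ω, (γ q ω) ^ 2 ∂μ = 1) :
    (1 - ((k : ℝ) - 2) * μ0 - 2 * ν ^ 2) * ((k : ℝ) - 1)
      ≤ ∫ ω, ‖(∑ q ∈ S.erase i, γ q ω • D0 q) -
          ⟪dh, ∑ q ∈ S.erase i, γ q ω • D0 q⟫ • dh‖ ^ 2 ∂μ := by
  classical
  set T := S.erase i with hTdef
  set a : Fin p → ℝ := fun q => ⟪dh, D0 q⟫ with ha
  -- integrability of products
  have hmul : ∀ q r : Fin p, Integrable (fun ω => γ q ω * γ r ω) μ := by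
    intro q r
    have h : MemLp (γ q • γ r) 1 μ :=
      (hL2 r).smul (hL2 q)
    rw [← memLp_one_iff_integrable]
    exact (by simpa [Pi.smul_apply, smul_eq_mul] using h : MemLp (γ q * γ r) 1 μ)
  -- expectation of products
  have hexp : ∀ q ∈ T, ∀ r ∈ T,
      ∫ ω, γ q ω * γ r ω ∂μ = if q = r then 1 else 0 := by
    intro q _ r _
    by_cases hqr : q = r
    · subst hqr
      simp only [if_true]
      simpa [pow_two] using hvar q
    · simp only [hqr, if_false]
      have hIF : IndepFun (γ q) (γ r) μ := hind.indepFun hqr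
      have := hIF.integral_mul_eq_mul_integral ((hL2 q).1)
        ((hL2 r).1)
      simpa [Pi.mul_apply, hmean q, hmean r] using this
  -- pointwise expansion
  have hpt : ∀ ω, ‖(∑ q ∈ T, γ q ω • D0 q) - ⟪dh, ∑ q ∈ T, γ q ω • D0 q⟫ • dh‖ ^ 2
      = ∑ q ∈ T, ∑ r ∈ T, γ q ω * γ r ω * (⟪D0 q, D0 r⟫ - a q * a r) := by
    intro ω
    set X := ∑ q ∈ T, γ q ω • D0 q with hX
    have hc : ⟪dh, X⟫ = ∑ q ∈ T, γ q ω * a q := by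
      rw [hX, inner_sum]
      exact Finset.sum_congr rfl fun q _ => real_inner_smul_right dh (D0 q) (γ q ω)
    have hnX : ‖X‖ ^ 2 = ∑ q ∈ T, ∑ r ∈ T, γ q ω * γ r ω * ⟪D0 q, D0 r⟫ := by
      rw [← real_inner_self_eq_norm_sq, hX, sum_inner]
      refine Finset.sum_congr rfl fun q _ => ?_
      rw [inner_sum]
      refine Finset.sum_congr rfl fun r _ => ?_
      rw [real_inner_smul_left, real_inner_smul_right]; ring
    have h1 : ‖X - ⟪dh, X⟫ • dh‖ ^ 2 = ‖X‖ ^ 2 - ⟪dh, X⟫ ^ 2 := by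
      rw [norm_sub_sq_real, real_inner_smul_right, norm_smul, mul_pow, hdh]
      rw [real_inner_comm X dh]
      simp [sq_abs]
      ring
    have h2 : ⟪dh, X⟫ ^ 2 = ∑ q ∈ T, ∑ r ∈ T, γ q ω * γ r ω * (a q * a r) := by
      rw [hc, pow_two, Finset.sum_mul_sum]
      exact Finset.sum_congr rfl fun q _ => Finset.sum_congr rfl fun r _ => by ring
    rw [h1, hnX, h2, ← Finset.sum_sub_distrib]
    refine Finset.sum_congr rfl fun q _ => ?_
    rw [← Finset.sum_sub_distrib]
    exact Finset.sum_congr rfl fun r _ => by ring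
  -- compute the integral
  have hInt : (∫ ω, ‖(∑ q ∈ T, γ q ω • D0 q) - ⟪dh, ∑ q ∈ T, γ q ω • D0 q⟫ • dh‖ ^ 2 ∂μ)
      = ∑ q ∈ T, (1 - a q ^ 2) := by
    have : (∫ ω, ‖(∑ q ∈ T, γ q ω • D0 q) - ⟪dh, ∑ q ∈ T, γ q ω • D0 q⟫ • dh‖ ^ 2 ∂μ)
        = ∫ ω, ∑ q ∈ T, ∑ r ∈ T, γ q ω * γ r ω * (⟪D0 q, D0 r⟫ - a q * a r) ∂μ := by
      exact integral_congr_ae (Filter.Eventually.of_forall hpt)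
    rw [this]
    rw [integral_finset_sum T fun q _ =>
      integrable_finset_sum T fun r _ => (hmul q r).mul_const _]
    refine Finset.sum_congr rfl fun q hq => ?_
    rw [integral_finset_sum T fun r _ => (hmul q r).mul_const _]
    have hdiag : ∀ r ∈ T,
        (∫ ω, γ q ω * γ r ω * (⟪D0 q, D0 r⟫ - a q * a r) ∂μ)
          = (if q = r then 1 else 0) * (⟪D0 q, D0 r⟫ - a q * a r) := by
      intro r hr
      rw [integral_mul_const, hexp q hq r hr]
    rw [Finset.sum_congr rfl hdiag]
    simp only [ite_mul, one_mul, zero_mul]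
    rw [Finset.sum_ite_eq T q (fun r => (⟪D0 q, D0 r⟫ - a q * a r)), if_pos hq]
    have : ⟪D0 q, D0 q⟫ = 1 := by
      rw [real_inner_self_eq_norm_sq, hD0 q]; norm_num
    rw [this]; ring
  rw [hTdef] at hInt ⊢
  rw [hInt]
  -- final estimate
  have hk1 : 1 ≤ k := by
    rw [← hS]; exact Finset.card_pos.mpr ⟨i, hi⟩
  have hcardT : ((S.erase i).card : ℝ) = (k : ℝ) - 1 := by
    rw [Finset.card_erase_of_mem hi, hS]
    push_cast [Nat.cast_sub hk1]
    ring
  have hstep1 : ((k : ℝ) - 1) * (1 - ν ^ 2) ≤ ∑ q ∈ S.erase i, (1 - a q ^ 2) := by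
    have : ∀ q ∈ S.erase i, 1 - ν ^ 2 ≤ 1 - a q ^ 2 := by
      intro q hq
      have h1 : a q ^ 2 ≤ ν ^ 2 := by
        rw [← sq_abs (a q), ← sq_abs ν]
        exact pow_le_pow_left₀ (abs_nonneg _) ((hν q hq).trans (le_abs_self ν)) 2
      linarith
    calc ((k : ℝ) - 1) * (1 - ν ^ 2)
        = ∑ _q ∈ S.erase i, (1 - ν ^ 2) := by
          rw [Finset.sum_const, nsmul_eq_mul, hcardT]
      _ ≤ ∑ q ∈ S.erase i, (1 - a q ^ 2) := Finset.sum_le_sum this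
  refine le_trans ?_ hstep1
  rcases eq_or_lt_of_le hk1 with hk | hk
  · rw [← hk]; norm_num
  · have hk2 : (2 : ℝ) ≤ (k : ℝ) := by exact_mod_cast hk
    have hν2 : 0 ≤ ν ^ 2 := sq_nonneg ν
    nlinarith [mul_nonneg (mul_nonneg (sub_nonneg.mpr hk2) hμ0) (by linarith : (0:ℝ) ≤ (k:ℝ) - 1), mul_nonneg hν2 (by linarith : (0:ℝ) ≤ (k:ℝ) - 1)]
end
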